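/- Let n ≥ 1 and m ≥ 1, let X = Fin n → ZMod 2 and Ym = Fin m → ZMod 2, let E be a finite nonempty type (the algorithm's workspace), and consider H = EuclideanSpace ℂ (X × Ym × E × (X → Ym)). Let U_FO be the Fourier Oracle unitary acting on the X, Ym and F = (X → Ym) registers (and as the identity on E), and for each l let P_l be the orthogonal projection onto the span of standard basis vectors whose F-component r has exactly l nonzero entries. Let q ≥ 0, let A₀, …, A_q be arbitrary unitaries on EuclideanSpace ℂ (X × Ym × E), each extended by the identity on the F-register, let ψ₀ be any unit vector of EuclideanSpace ℂ (X × Ym × E), and let r₀ : X → Ym be the all-zero function. Then the state ψ := A_q · U_FO · A_{q−1} · ⋯ · U_FO · A₀ · (ψ₀ ⊗ e_{r₀}) satisfies P_l ψ = 0 for every l > q. -/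

import Mathlib

set_option synthInstance.maxSize 1024

noncomputable section

variable (n m : ℕ) (E : Type*) [Fintype E] [DecidableEq E] [Nonempty E]

/-- Index set of the computational basis: query input register `X = Fin n → ZMod 2`,
query output register `Ym = Fin m → ZMod 2`, workspace `E`, Fourier Oracle register `X → Ym`. -/
abbrev QIdx :=
  (Fin n → ZMod 2) × (Fin m → ZMod 2) × E × ((Fin n → ZMod 2) → (Fin m → ZMod 2))

/-- Index set of the algorithm's registers (without the Fourier Oracle register). -/
abbrev AIdx := (Fin n → ZMod 2) × (Fin m → ZMod 2) × E

/-- The standard oracle unitary `U_O`, the permutation matrix induced on standard basis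
vectors by `(x, y, z, r) ↦ (x, y + r x, z, r)`. -/
def UOmat : Matrix (QIdx n m E) (QIdx n m E) ℂ := fun p q =>
  if p = (q.1, q.2.1 + q.2.2.2 q.1, q.2.2.1, q.2.2.2) then 1 else 0

/-- The Hadamard transform `H_F` on the Fourier-Oracle register (identity on `X × Ym × E`),
with `F`-register matrix entries `⟨e_s, H_F e_r⟩ = 2^{-m·2ⁿ/2} (-1)^{Σ_{x''} Σ_j (r x'' j)(s x'' j)}`. -/
def HFmat : Matrix (QIdx n m E) (QIdx n m E) ℂ := fun p q =>
  if p.1 = q.1 ∧ p.2.1 = q.2.1 ∧ p.2.2.1 = q.2.2.1 then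
    ((((Real.sqrt 2) ^ (m * 2 ^ n))⁻¹ : ℝ) : ℂ) *
      (-1 : ℂ) ^
        (∑ x'' : Fin n → ZMod 2, ∑ j : Fin m, (q.2.2.2 x'' j).val * (p.2.2.2 x'' j).val)
  else 0

/-- The Fourier Oracle unitary `U_FO = H_F · U_O · H_F`. -/
def UFOmat : Matrix (QIdx n m E) (QIdx n m E) ℂ :=
  HFmat n m E * UOmat n m E * HFmat n m E

/-- Extension of a unitary on the algorithm's registers by the identity on the
Fourier-Oracle register. -/
def extMat (A : Matrix (AIdx n m E) (AIdx n m E) ℂ) :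
    Matrix (QIdx n m E) (QIdx n m E) ℂ := fun p q =>
  if p.2.2.2 = q.2.2.2 then A (p.1, p.2.1, p.2.2.1) (q.1, q.2.1, q.2.2.1) else 0

/-- `P l`: the orthogonal projection onto the span of the standard basis vectors whose
`F`-component has exactly `l` nonzero entries. -/
def Pmat (l : ℕ) : Matrix (QIdx n m E) (QIdx n m E) ℂ := fun p q =>
  if p = q ∧ (Finset.univ.filter fun x' : Fin n → ZMod 2 => p.2.2.2 x' ≠ 0).card = l
  then 1 else 0

/-- The circuit matrix `A q · U_FO · A (q-1) · ⋯ · U_FO · A 0` (each `A i` extended by the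
identity on the `F`-register). -/
def circuitMat : (q : ℕ) → (Fin (q + 1) → Matrix (AIdx n m E) (AIdx n m E) ℂ) →
    Matrix (QIdx n m E) (QIdx n m E) ℂ
  | 0, A => extMat n m E (A 0)
  | q + 1, A =>
      extMat n m E (A (Fin.last (q + 1))) * UFOmat n m E *
        circuitMat q (fun i => A i.castSucc)

/- ======================= auxiliary lemmas ======================= -/

lemma zz_ne_add_eq_one : ∀ a b : ZMod 2, a ≠ b → a + b = 1 := by decide

def flipF (x' : Fin n → ZMod 2) (j : Fin m)
    (s : (Fin n → ZMod 2) → Fin m → ZMod 2) : (Fin n → ZMod 2) → Fin m → ZMod 2 :=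
  fun x i => if x = x' ∧ i = j then s x i + 1 else s x i

lemma flipF_flipF (x' : Fin n → ZMod 2) (j : Fin m)
    (s : (Fin n → ZMod 2) → Fin m → ZMod 2) : flipF n m x' j (flipF n m x' j s) = s := by
  have h2 : ∀ z : ZMod 2, z + 1 + 1 = z := by decide
  funext x i
  by_cases h : x = x' ∧ i = j <;> simp [flipF, h, h2]

lemma flipF_apply_ne (x' : Fin n → ZMod 2) (j : Fin m)
    (s : (Fin n → ZMod 2) → Fin m → ZMod 2) (x : Fin n → ZMod 2) (hx : x ≠ x') :
    flipF n m x' j s x = s x := by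
  funext i; simp [flipF, hx]

lemma flipF_ne (x' : Fin n → ZMod 2) (j : Fin m)
    (s : (Fin n → ZMod 2) → Fin m → ZMod 2) : flipF n m x' j s ≠ s := by
  intro h
  have h2 : flipF n m x' j s x' j = s x' j + 1 := by simp [flipF]
  rw [h] at h2
  exact (by decide : ∀ z : ZMod 2, z ≠ z + 1) _ h2

lemma neg_one_pow_add_eq_zero {e1 e2 : ℕ} (h : Odd (e1 + e2)) :
    (-1 : ℂ) ^ e1 + (-1 : ℂ) ^ e2 = 0 := by
  rcases Nat.even_or_odd e1 with h1 | h1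
  · have h2 : Odd e2 := by
      rcases Nat.even_or_odd e2 with h2 | h2
      · exact absurd (h1.add h2) (Nat.not_even_iff_odd.mpr h)
      · exact h2
    rw [h1.neg_one_pow, h2.neg_one_pow]; ring
  · have h2 : Even e2 := by
      rcases Nat.even_or_odd e2 with h2 | h2
      · exact h2
      · exact absurd (h1.add_odd h2) (Nat.not_even_iff_odd.mpr h)
    rw [h1.neg_one_pow, h2.neg_one_pow]; ring

lemma odd_flip_sum {ι : Type*} [Fintype ι] [DecidableEq ι] (s t u : ι → ZMod 2) (i₀ : ι)
    (h : t i₀ ≠ u i₀) :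
    Odd ((∑ i, (s i).val * (t i).val) + (∑ i, (u i).val * (s i).val) +
      ((∑ i, ((if i = i₀ then s i + 1 else s i)).val * (t i).val) +
       (∑ i, (u i).val * ((if i = i₀ then s i + 1 else s i)).val))) := by
  rw [← ZMod.natCast_eq_one_iff_odd]
  push_cast
  simp only [ZMod.natCast_val, ZMod.cast_id]
  rw [← Finset.sum_add_distrib, ← Finset.sum_add_distrib, ← Finset.sum_add_distrib]
  have key : ∀ i, (s i * t i + u i * s i +
      ((if i = i₀ then s i + 1 else s i) * t i + u i * (if i = i₀ then s i + 1 else s i)))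
      = if i = i₀ then t i + u i else 0 := by
    intro i
    by_cases hi : i = i₀
    · simp only [if_pos hi]
      exact (by decide : ∀ a b c : ZMod 2, a*b + c*a + ((a+1)*b + c*(a+1)) = b + c) _ _ _
    · simp only [if_neg hi]
      exact (by decide : ∀ a b c : ZMod 2, a*b + c*a + (a*b + c*a) = 0) _ _ _
  rw [Finset.sum_congr rfl fun i _ => key i]
  rw [Finset.sum_ite_eq' Finset.univ i₀ fun i => t i + u i]
  simp [zz_ne_add_eq_one _ _ h]

lemma UFO_apply (p q' : QIdx n m E) :
    UFOmat n m E p q' = ∑ a : QIdx n m E,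
      HFmat n m E p (a.1, a.2.1 + a.2.2.2 a.1, a.2.2.1, a.2.2.2) * HFmat n m E a q' := by
  unfold UFOmat
  rw [Matrix.mul_apply]
  refine Finset.sum_congr rfl fun a _ => ?_
  rw [Matrix.mul_apply]
  congr 1
  have huo : ∀ b, UOmat n m E b a =
      if b = (a.1, a.2.1 + a.2.2.2 a.1, a.2.2.1, a.2.2.2) then 1 else 0 := fun _ => rfl
  simp_rw [huo, mul_ite, mul_one, mul_zero]
  rw [Finset.sum_ite_eq' Finset.univ]
  simp

lemma UFO_vanish (p q' : QIdx n m E) (x' : Fin n → ZMod 2) (hx : x' ≠ q'.1)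
    (j : Fin m) (hj : p.2.2.2 x' j ≠ q'.2.2.2 x' j) :
    UFOmat n m E p q' = 0 := by
  rw [UFO_apply]
  apply Finset.sum_ninvolution
    (g := fun a : QIdx n m E => (a.1, a.2.1, a.2.2.1, flipF n m x' j a.2.2.2))
  · intro a
    by_cases h1 : a.1 = q'.1 ∧ a.2.1 = q'.2.1 ∧ a.2.2.1 = q'.2.2.1
    case neg =>
      have z1 : HFmat n m E a q' = 0 := if_neg h1
      have z2 : HFmat n m E (a.1, a.2.1, a.2.2.1, flipF n m x' j a.2.2.2) q' = 0 := if_neg h1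
      rw [z1, z2, mul_zero, mul_zero, add_zero]
    case pos =>
      have hxa : a.1 ≠ x' := fun h => hx (h.symm.trans h1.1)
      have hflip : flipF n m x' j a.2.2.2 a.1 = a.2.2.2 a.1 :=
        flipF_apply_ne n m x' j a.2.2.2 a.1 hxa
      by_cases h2 : p.1 = a.1 ∧ p.2.1 = a.2.1 + a.2.2.2 a.1 ∧ p.2.2.1 = a.2.2.1
      case neg =>
        have z1 : HFmat n m E p (a.1, a.2.1 + a.2.2.2 a.1, a.2.2.1, a.2.2.2) = 0 := if_neg h2
        have z2 : HFmat n m E p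
            (a.1, a.2.1 + flipF n m x' j a.2.2.2 a.1, a.2.2.1, flipF n m x' j a.2.2.2) = 0 := by
          rw [hflip]; exact if_neg h2
        rw [z1, z2, zero_mul, zero_mul, add_zero]
      case pos =>
        have e1 : HFmat n m E p (a.1, a.2.1 + a.2.2.2 a.1, a.2.2.1, a.2.2.2) =
            ((((Real.sqrt 2) ^ (m * 2 ^ n))⁻¹ : ℝ) : ℂ) *
            (-1 : ℂ) ^ (∑ x'' : Fin n → ZMod 2, ∑ i : Fin m,
              (a.2.2.2 x'' i).val * (p.2.2.2 x'' i).val) := if_pos h2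
        have e2 : HFmat n m E a q' =
            ((((Real.sqrt 2) ^ (m * 2 ^ n))⁻¹ : ℝ) : ℂ) *
            (-1 : ℂ) ^ (∑ x'' : Fin n → ZMod 2, ∑ i : Fin m,
              (q'.2.2.2 x'' i).val * (a.2.2.2 x'' i).val) := if_pos h1
        have e1' : HFmat n m E p
            (a.1, a.2.1 + flipF n m x' j a.2.2.2 a.1, a.2.2.1, flipF n m x' j a.2.2.2) =
            ((((Real.sqrt 2) ^ (m * 2 ^ n))⁻¹ : ℝ) : ℂ) *
            (-1 : ℂ) ^ (∑ x'' : Fin n → ZMod 2, ∑ i : Fin m,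
              (flipF n m x' j a.2.2.2 x'' i).val * (p.2.2.2 x'' i).val) := by
          rw [hflip]; exact if_pos h2
        have e2' : HFmat n m E (a.1, a.2.1, a.2.2.1, flipF n m x' j a.2.2.2) q' =
            ((((Real.sqrt 2) ^ (m * 2 ^ n))⁻¹ : ℝ) : ℂ) *
            (-1 : ℂ) ^ (∑ x'' : Fin n → ZMod 2, ∑ i : Fin m,
              (q'.2.2.2 x'' i).val * (flipF n m x' j a.2.2.2 x'' i).val) := if_pos h1
        rw [e1, e2, e1', e2']
        set c : ℂ := ((((Real.sqrt 2) ^ (m * 2 ^ n))⁻¹ : ℝ) : ℂ)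
        set E1 := ∑ x'' : Fin n → ZMod 2, ∑ i : Fin m,
          (a.2.2.2 x'' i).val * (p.2.2.2 x'' i).val with hE1
        set E2 := ∑ x'' : Fin n → ZMod 2, ∑ i : Fin m,
          (q'.2.2.2 x'' i).val * (a.2.2.2 x'' i).val with hE2
        set E1' := ∑ x'' : Fin n → ZMod 2, ∑ i : Fin m,
          (flipF n m x' j a.2.2.2 x'' i).val * (p.2.2.2 x'' i).val with hE1'
        set E2' := ∑ x'' : Fin n → ZMod 2, ∑ i : Fin m,
          (q'.2.2.2 x'' i).val * (flipF n m x' j a.2.2.2 x'' i).val with hE2'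
        have hodd : Odd (E1 + E2 + (E1' + E2')) := by
          rw [hE1, hE2, hE1', hE2']
          simp only [flipF]
          have := odd_flip_sum (ι := (Fin n → ZMod 2) × Fin m)
            (fun w => a.2.2.2 w.1 w.2) (fun w => p.2.2.2 w.1 w.2)
            (fun w => q'.2.2.2 w.1 w.2) (x', j) hj
          simp only [Fintype.sum_prod_type, Prod.mk.injEq] at this
          exact this
        have hc : (-1 : ℂ) ^ (E1 + E2) + (-1 : ℂ) ^ (E1' + E2') = 0 :=
          neg_one_pow_add_eq_zero hodd
        calc c * (-1 : ℂ) ^ E1 * (c * (-1 : ℂ) ^ E2) +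
              c * (-1 : ℂ) ^ E1' * (c * (-1 : ℂ) ^ E2')
            = c * c * ((-1 : ℂ) ^ (E1 + E2) + (-1 : ℂ) ^ (E1' + E2')) := by
              rw [pow_add, pow_add]; ring
          _ = 0 := by rw [hc, mul_zero]
  · intro a _ h
    exact flipF_ne n m x' j a.2.2.2 (congrArg (fun t : QIdx n m E => t.2.2.2) h)
  · intro a; exact Finset.mem_univ _
  · intro a
    simp only [flipF_flipF]

lemma UFO_entry_zero (p q' : QIdx n m E)
    (h : (Finset.univ.filter fun x : Fin n → ZMod 2 => q'.2.2.2 x ≠ 0).card + 1 <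
         (Finset.univ.filter fun x : Fin n → ZMod 2 => p.2.2.2 x ≠ 0).card) :
    UFOmat n m E p q' = 0 := by
  by_cases hagree : ∀ x, x ≠ q'.1 → p.2.2.2 x = q'.2.2.2 x
  · exfalso
    have hsub : (Finset.univ.filter fun x : Fin n → ZMod 2 => p.2.2.2 x ≠ 0) ⊆
        insert q'.1 (Finset.univ.filter fun x : Fin n → ZMod 2 => q'.2.2.2 x ≠ 0) := by
      intro x hxmem
      simp only [Finset.mem_filter, Finset.mem_univ, true_and] at hxmem
      rcases eq_or_ne x q'.1 with hxq | hxq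
      · rw [hxq]; exact Finset.mem_insert_self _ _
      · refine Finset.mem_insert_of_mem ?_
        simp only [Finset.mem_filter, Finset.mem_univ, true_and]
        rw [← hagree x hxq]; exact hxmem
    have h1 := Finset.card_le_card hsub
    have h2 := Finset.card_insert_le q'.1
      (Finset.univ.filter fun x : Fin n → ZMod 2 => q'.2.2.2 x ≠ 0)
    omega
  · push_neg at hagree
    obtain ⟨x', hx', hne⟩ := hagree
    obtain ⟨j, hj⟩ := Function.ne_iff.mp hne
    exact UFO_vanish n m E p q' x' hx' j hj

lemma circuit_entry_zero : ∀ (q : ℕ) (A : Fin (q + 1) → Matrix (AIdx n m E) (AIdx n m E) ℂ)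
    (p p' : QIdx n m E),
    (Finset.univ.filter fun x : Fin n → ZMod 2 => p'.2.2.2 x ≠ 0).card + q <
      (Finset.univ.filter fun x : Fin n → ZMod 2 => p.2.2.2 x ≠ 0).card →
    circuitMat n m E q A p p' = 0
  | 0, A, p, p', h => by
      show extMat n m E (A 0) p p' = 0
      rw [extMat]
      rw [if_neg]
      intro hF
      rw [hF] at h
      omega
  | q + 1, A, p, p', h => by
      show (extMat n m E (A (Fin.last (q + 1))) * UFOmat n m E *
        circuitMat n m E q (fun i => A i.castSucc)) p p' = 0
      rw [Matrix.mul_apply]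
      apply Finset.sum_eq_zero
      intro b _
      by_cases hb : (Finset.univ.filter fun x : Fin n → ZMod 2 => b.2.2.2 x ≠ 0).card ≤
          (Finset.univ.filter fun x : Fin n → ZMod 2 => p'.2.2.2 x ≠ 0).card + q
      · rw [Matrix.mul_apply]
        have hz : ∀ a : QIdx n m E,
            extMat n m E (A (Fin.last (q + 1))) p a * UFOmat n m E a b = 0 := by
          intro a
          by_cases ha : p.2.2.2 = a.2.2.2
          · have : UFOmat n m E a b = 0 := by
              apply UFO_entry_zero
              rw [← ha]
              omega
            rw [this, mul_zero]
          · rw [extMat, if_neg ha, zero_mul]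
        rw [Finset.sum_eq_zero fun a _ => hz a, zero_mul]
      · rw [circuit_entry_zero q (fun i => A i.castSucc) b p' (by omega), mul_zero]

/-- The joint state of a `q`-query algorithm and the Fourier Oracle (initialized in the
all-zero state `e_{r₀}`) lies in the kernel of `P l` for every `l > q`. -/
theorem state_in_kernel_of_Pl
    (hn : 1 ≤ n) (hm : 1 ≤ m)
    (q : ℕ) (A : Fin (q + 1) → Matrix (AIdx n m E) (AIdx n m E) ℂ)
    (hA : ∀ i, A i ∈ Matrix.unitaryGroup (AIdx n m E) ℂ)
    (ψ₀ : EuclideanSpace ℂ (AIdx n m E)) (hψ₀ : ‖ψ₀‖ = 1)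
    (l : ℕ) (hl : q < l) :
    Matrix.toEuclideanLin (Pmat n m E l)
      (Matrix.toEuclideanLin (circuitMat n m E q A)
        (WithLp.toLp 2 (fun p : QIdx n m E =>
          if p.2.2.2 = 0 then ψ₀ (p.1, p.2.1, p.2.2.1) else 0))) = 0 := by
  rw [Matrix.toEuclideanLin_apply, Matrix.toEuclideanLin_apply]
  have mv : ∀ (M : Matrix (QIdx n m E) (QIdx n m E) ℂ) (v : QIdx n m E → ℂ)
      (i : QIdx n m E), Matrix.mulVec M v i = ∑ jj : QIdx n m E, M i jj * v jj :=
    fun M v i => rfl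
  ext p
  simp only [PiLp.toLp_apply, WithLp.ofLp_toLp, PiLp.zero_apply]
  rw [mv]
  simp only [mv]
  apply Finset.sum_eq_zero
  intro b _
  by_cases hPb : p = b ∧
      (Finset.univ.filter fun x' : Fin n → ZMod 2 => p.2.2.2 x' ≠ 0).card = l
  · have hcb : (Finset.univ.filter fun x : Fin n → ZMod 2 => b.2.2.2 x ≠ 0).card = l := by
      rw [← hPb.1]; exact hPb.2
    have hz : ∀ p' ∈ (Finset.univ : Finset (QIdx n m E)),
        circuitMat n m E q A b p' *
          (if p'.2.2.2 = 0 then ψ₀ (p'.1, p'.2.1, p'.2.2.1) else 0) = 0 := by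
      intro p' _
      by_cases hp' : p'.2.2.2 = 0
      · have hw : (Finset.univ.filter fun x : Fin n → ZMod 2 => p'.2.2.2 x ≠ 0).card = 0 := by
          simp [hp']
        rw [circuit_entry_zero n m E q A b p' (by omega), zero_mul]
      · simp [hp']
    rw [Finset.sum_eq_zero hz, mul_zero]
  · rw [Pmat, if_neg hPb, zero_mul]

end
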